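/- If q is a primitive l-th root of unity in k with l ≥ 5, then in the algebra U_q⁺(B₂) the elements z, e₁ˡ, e₂ˡ, and e₃ˡ are central. -/

import Mathlib

open FreeAlgebra

/-- The defining relations of `U_q⁺(B₂)`: generators `0 ↦ e₁`, `1 ↦ e₂`, `2 ↦ e₃`,
`3 ↦ z` subject to `eᵢz = zeᵢ`, `e₁e₃ = q⁻²e₃e₁`, `e₂e₁ = q⁻²e₁e₂ - q⁻²e₃`,
`e₂e₃ = q²e₃e₂ + z`. -/
inductive UqB2Rel (k : Type*) [Field k] (q : k) :
    FreeAlgebra k (Fin 4) → FreeAlgebra k (Fin 4) → Prop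
  | e1z : UqB2Rel k q (ι k (0 : Fin 4) * ι k (3 : Fin 4)) (ι k (3 : Fin 4) * ι k (0 : Fin 4))
  | e2z : UqB2Rel k q (ι k (1 : Fin 4) * ι k (3 : Fin 4)) (ι k (3 : Fin 4) * ι k (1 : Fin 4))
  | e3z : UqB2Rel k q (ι k (2 : Fin 4) * ι k (3 : Fin 4)) (ι k (3 : Fin 4) * ι k (2 : Fin 4))
  | e1e3 : UqB2Rel k q (ι k (0 : Fin 4) * ι k (2 : Fin 4))
      ((q ^ 2)⁻¹ • (ι k (2 : Fin 4) * ι k (0 : Fin 4)))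
  | e2e1 : UqB2Rel k q (ι k (1 : Fin 4) * ι k (0 : Fin 4))
      ((q ^ 2)⁻¹ • (ι k (0 : Fin 4) * ι k (1 : Fin 4)) - (q ^ 2)⁻¹ • ι k (2 : Fin 4))
  | e2e3 : UqB2Rel k q (ι k (1 : Fin 4) * ι k (2 : Fin 4))
      (q ^ 2 • (ι k (2 : Fin 4) * ι k (1 : Fin 4)) + ι k (3 : Fin 4))


section AuxAlg
variable {k A : Type*} [Field k] [Ring A] [Algebra k A]

/-- pushing Y past powers of X when `Y * X = u • (X * Y)`. -/
theorem uqb2_aux_pow (u : k) (X Y : A) (h : Y * X = u • (X * Y)) :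
    ∀ n, Y * X ^ n = u ^ n • (X ^ n * Y) := by
  intro n
  induction n with
  | zero => simp
  | succ n ih =>
    calc Y * X ^ (n+1) = (Y * X) * X ^ n := by rw [pow_succ', mul_assoc]
    _ = u • (X * (Y * X ^ n)) := by rw [h, smul_mul_assoc, mul_assoc]
    _ = u • (X * (u ^ n • (X ^ n * Y))) := by rw [ih]
    _ = u ^ (n+1) • (X ^ (n+1) * Y) := by
        simp only [mul_smul_comm, smul_smul, ← mul_assoc, ← pow_succ, ← pow_succ']

/-- pushing Y past powers of X when `Y * X = u • (X * Y) + w • Z` with `Z` commuting with `X`. -/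
theorem uqb2_aux_powZ (u w : k) (X Y Z : A) (hZX : Z * X = X * Z)
    (h : Y * X = u • (X * Y) + w • Z) (b : ℕ → k) (hb1 : b 1 = w)
    (hbr : ∀ n, b (n+2) = u * b (n+1) + w) :
    ∀ n, Y * X ^ (n+1) = u ^ (n+1) • (X ^ (n+1) * Y) + b (n+1) • (X ^ n * Z) := by
  have hcZX : Commute Z X := hZX
  have hZp : ∀ m, Z * X ^ m = X ^ m * Z := fun m => (hcZX.pow_right m).eq
  intro n
  induction n with
  | zero => simpa [hb1] using h
  | succ n ih =>
    calc Y * X ^ (n+2) = (Y * X) * X ^ (n+1) := by rw [pow_succ', mul_assoc]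
    _ = u • (X * (Y * X ^ (n+1))) + w • (Z * X ^ (n+1)) := by
        rw [h, add_mul, smul_mul_assoc, smul_mul_assoc, mul_assoc]
    _ = u • (X * (u ^ (n+1) • (X ^ (n+1) * Y) + b (n+1) • (X ^ n * Z)))
          + w • (X ^ (n+1) * Z) := by rw [ih, hZp]
    _ = u ^ (n+2) • (X ^ (n+2) * Y) + b (n+2) • (X ^ (n+1) * Z) := by
        rw [hbr n]
        simp only [mul_add, mul_smul_comm, smul_add, smul_smul, add_smul,
          ← mul_assoc, ← pow_succ, ← pow_succ']
        module

/-- pushing E2 past powers of E1. -/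
theorem uqb2_aux_21 (u v : k) (E1 E2 E3 : A) (h31 : E3 * E1 = u • (E1 * E3))
    (h21 : E2 * E1 = v • (E1 * E2) - v • E3) (a : ℕ → k) (ha1 : a 1 = v)
    (har : ∀ n, a (n+2) = v * a (n+1) + v * u ^ (n+1)) :
    ∀ n, E2 * E1 ^ (n+1) = v ^ (n+1) • (E1 ^ (n+1) * E2) - a (n+1) • (E1 ^ n * E3) := by
  have h3p := uqb2_aux_pow u E1 E3 h31
  intro n
  induction n with
  | zero => simpa [ha1] using h21
  | succ n ih =>
    calc E2 * E1 ^ (n+2) = (E2 * E1) * E1 ^ (n+1) := by rw [pow_succ', mul_assoc]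
    _ = v • (E1 * (E2 * E1 ^ (n+1))) - v • (E3 * E1 ^ (n+1)) := by
        rw [h21, sub_mul, smul_mul_assoc, smul_mul_assoc, mul_assoc]
    _ = v • (E1 * (v ^ (n+1) • (E1 ^ (n+1) * E2) - a (n+1) • (E1 ^ n * E3)))
          - v • (u ^ (n+1) • (E1 ^ (n+1) * E3)) := by rw [ih, h3p]
    _ = v ^ (n+2) • (E1 ^ (n+2) * E2) - a (n+2) • (E1 ^ (n+1) * E3) := by
        rw [har n]
        simp only [mul_sub, mul_smul_comm, smul_sub, smul_smul, add_smul,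
          ← mul_assoc, ← pow_succ, ← pow_succ']
        module

/-- pushing E1 past powers of E2. -/
theorem uqb2_aux_12 (u v : k) (E1 E2 E3 Z : A)
    (h12 : E1 * E2 = u • (E2 * E1) + E3)
    (f : ℕ → k)
    (h3pow : ∀ n, E3 * E2 ^ (n+1) = v ^ (n+1) • (E2 ^ (n+1) * E3) + f (n+1) • (E2 ^ n * Z))
    (c d : ℕ → k) (hc1 : c 1 = 1) (hd1 : d 1 = 0)
    (hc : ∀ n, c (n+2) = u * c (n+1) + v ^ (n+1))
    (hd : ∀ n, d (n+2) = u * d (n+1) + f (n+1)) :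
    ∀ n, E1 * E2 ^ (n+2) = u ^ (n+2) • (E2 ^ (n+2) * E1) + c (n+2) • (E2 ^ (n+1) * E3)
      + d (n+2) • (E2 ^ n * Z) := by
  intro n
  induction n with
  | zero =>
    calc E1 * E2 ^ 2 = (E1 * E2) * E2 ^ 1 := by rw [pow_succ', mul_assoc]
    _ = u • (E2 * (E1 * E2 ^ 1)) + E3 * E2 ^ 1 := by
        rw [h12, add_mul, smul_mul_assoc, mul_assoc]
    _ = u ^ 2 • (E2 ^ 2 * E1) + c 2 • (E2 ^ 1 * E3) + d 2 • (E2 ^ 0 * Z) := by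
        rw [h3pow 0, pow_one, h12, hc 0, hd 0, hc1, hd1]
        simp only [pow_succ, pow_zero, pow_one, one_mul, mul_one, mul_zero, zero_add,
          mul_add, mul_smul_comm, smul_add, smul_smul, add_smul, mul_assoc]
        module
  | succ n ih =>
    calc E1 * E2 ^ (n+3) = (E1 * E2) * E2 ^ (n+2) := by rw [pow_succ', mul_assoc]
    _ = u • (E2 * (E1 * E2 ^ (n+2))) + E3 * E2 ^ (n+2) := by
        rw [h12, add_mul, smul_mul_assoc, mul_assoc]
    _ = u • (E2 * (u ^ (n+2) • (E2 ^ (n+2) * E1) + c (n+2) • (E2 ^ (n+1) * E3)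
          + d (n+2) • (E2 ^ n * Z)))
          + (v ^ (n+2) • (E2 ^ (n+2) * E3) + f (n+2) • (E2 ^ (n+1) * Z)) := by
        rw [ih, h3pow (n+1)]
    _ = u ^ (n+3) • (E2 ^ (n+3) * E1) + c (n+3) • (E2 ^ (n+2) * E3)
          + d (n+3) • (E2 ^ (n+1) * Z) := by
        rw [hc (n+1), hd (n+1)]
        simp only [mul_add, mul_smul_comm, smul_add, smul_smul, add_smul,
          ← mul_assoc, ← pow_succ, ← pow_succ']
        module
end AuxAlg


section Seq
variable {k : Type*} [Field k]
open Finset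

noncomputable def uqb2SeqA (u : k) (n : ℕ) : k := (u⁻¹) ^ n * ∑ j ∈ range n, (u ^ 2) ^ j
noncomputable def uqb2SeqB (u : k) (n : ℕ) : k := ∑ j ∈ range n, u ^ j
noncomputable def uqb2SeqF (u : k) (n : ℕ) : k := -u⁻¹ * ∑ j ∈ range n, (u⁻¹) ^ j
noncomputable def uqb2SeqC (u : k) (n : ℕ) : k := u ^ (n - 1) * ∑ j ∈ range n, ((u ^ 2)⁻¹) ^ j
noncomputable def uqb2SeqD (u : k) (n : ℕ) : k :=
  u⁻¹ / (1 - u⁻¹) * u ^ (n - 1) *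
    ((∑ j ∈ range n, ((u ^ 2)⁻¹) ^ j) - ∑ j ∈ range n, (u⁻¹) ^ j)

lemma uqb2SeqA_one {u : k} : uqb2SeqA u 1 = u⁻¹ := by
  unfold uqb2SeqA; simp

lemma uqb2SeqA_rec {u : k} (hu0 : u ≠ 0) (n : ℕ) :
    uqb2SeqA u (n + 2) = u⁻¹ * uqb2SeqA u (n + 1) + u⁻¹ * u ^ (n + 1) := by
  unfold uqb2SeqA
  rw [Finset.sum_range_succ (n := n + 1)]
  have h' : (u⁻¹ * u) ^ (n + 1) = 1 := by rw [inv_mul_cancel₀ hu0, one_pow]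
  linear_combination (u⁻¹ * u ^ (n + 1)) * h'

lemma uqb2SeqA_top {u : k} {l : ℕ} (h : ∑ j ∈ range l, (u ^ 2) ^ j = 0) : uqb2SeqA u l = 0 := by
  unfold uqb2SeqA; rw [h, mul_zero]

lemma uqb2SeqB_one {u : k} : uqb2SeqB u 1 = 1 := by
  unfold uqb2SeqB; simp

lemma uqb2SeqB_rec {u : k} (n : ℕ) : uqb2SeqB u (n + 2) = u * uqb2SeqB u (n + 1) + 1 := by
  unfold uqb2SeqB
  rw [geom_sum_succ]

lemma uqb2SeqB_top {u : k} {l : ℕ} (h : ∑ j ∈ range l, u ^ j = 0) : uqb2SeqB u l = 0 := h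

lemma uqb2SeqF_one {u : k} : uqb2SeqF u 1 = -u⁻¹ := by
  unfold uqb2SeqF; simp

lemma uqb2SeqF_rec {u : k} (n : ℕ) :
    uqb2SeqF u (n + 2) = u⁻¹ * uqb2SeqF u (n + 1) - u⁻¹ := by
  unfold uqb2SeqF
  rw [geom_sum_succ]
  ring

lemma uqb2SeqF_top {u : k} {l : ℕ} (h : ∑ j ∈ range l, (u⁻¹) ^ j = 0) : uqb2SeqF u l = 0 := by
  unfold uqb2SeqF; rw [h, mul_zero]

lemma uqb2SeqC_one {u : k} : uqb2SeqC u 1 = 1 := by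
  unfold uqb2SeqC; simp

lemma uqb2SeqC_rec {u : k} (hu0 : u ≠ 0) (n : ℕ) :
    uqb2SeqC u (n + 2) = u * uqb2SeqC u (n + 1) + (u⁻¹) ^ (n + 1) := by
  unfold uqb2SeqC
  simp only [show n + 2 - 1 = n + 1 from rfl, show n + 1 - 1 = n from rfl]
  rw [Finset.sum_range_succ (n := n + 1)]
  have h' : (u * u⁻¹) ^ (n + 1) = 1 := by rw [mul_inv_cancel₀ hu0, one_pow]
  linear_combination (u⁻¹) ^ (n + 1) * h'

lemma uqb2SeqC_top {u : k} {l : ℕ} (h : ∑ j ∈ range l, ((u ^ 2)⁻¹) ^ j = 0) :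
    uqb2SeqC u l = 0 := by
  unfold uqb2SeqC; rw [h, mul_zero]

lemma uqb2SeqD_one {u : k} : uqb2SeqD u 1 = 0 := by
  unfold uqb2SeqD; simp

lemma uqb2SeqD_rec {u : k} (hu0 : u ≠ 0) (hu1 : u ≠ 1) (n : ℕ) :
    uqb2SeqD u (n + 2) = u * uqb2SeqD u (n + 1) + uqb2SeqF u (n + 1) := by
  unfold uqb2SeqD uqb2SeqF
  have hv1 : u⁻¹ ≠ 1 := by
    intro h; exact hu1 (by rw [← inv_inv u, h, inv_one])
  have h1 : u⁻¹ - 1 ≠ 0 := sub_ne_zero.mpr hv1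
  have h3 : (1 : k) - u⁻¹ ≠ 0 := by
    intro h; apply h1; rw [sub_eq_zero] at h ⊢; exact h.symm
  have hgs : (u⁻¹ - 1) * ∑ j ∈ range (n + 1), (u⁻¹) ^ j = (u⁻¹) ^ (n + 1) - 1 :=
    mul_geom_sum u⁻¹ (n + 1)
  have hW' : (u⁻¹ - 1) * (u⁻¹ / (1 - u⁻¹)) = -u⁻¹ := by
    rw [show (u⁻¹ - 1) = -(1 - u⁻¹) by ring, neg_mul, mul_comm (1 - u⁻¹),
      div_mul_cancel₀ _ h3]
  have hx1 : u ^ (n + 1) * (u⁻¹) ^ (n + 1) = 1 := by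
    rw [inv_pow, mul_inv_cancel₀ (pow_ne_zero _ hu0)]
  have hx2 : u ^ (n + 1) * ((u ^ 2)⁻¹) ^ (n + 1) = (u⁻¹) ^ (n + 1) := by
    rw [inv_pow, inv_pow]; field_simp; ring
  have key : -u⁻¹ * ∑ j ∈ range (n + 1), (u⁻¹) ^ j
      = u⁻¹ / (1 - u⁻¹) * u ^ (n + 1) * (((u ^ 2)⁻¹) ^ (n + 1) - (u⁻¹) ^ (n + 1)) := by
    apply mul_left_cancel₀ h1
    linear_combination (-u⁻¹) * hgs
      + (u ^ (n + 1) * ((u⁻¹) ^ (n + 1) - ((u ^ 2)⁻¹) ^ (n + 1))) * hW'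
      + u⁻¹ * hx2 - u⁻¹ * hx1
  simp only [show n + 2 - 1 = n + 1 from rfl, show n + 1 - 1 = n from rfl]
  rw [Finset.sum_range_succ (f := fun j => ((u ^ 2)⁻¹) ^ j) (n := n + 1),
    Finset.sum_range_succ (f := fun j => (u⁻¹) ^ j) (n := n + 1), key]
  ring

lemma uqb2SeqD_top {u : k} {l : ℕ} (h2 : ∑ j ∈ range l, ((u ^ 2)⁻¹) ^ j = 0)
    (h1 : ∑ j ∈ range l, (u⁻¹) ^ j = 0) : uqb2SeqD u l = 0 := by
  unfold uqb2SeqD; rw [h1, h2]; simp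
end Seq

/-- If `q` is a primitive `l`-th root of unity with `l ≥ 5`, then in
`U_q⁺(B₂)` the elements `z`, `e₁ˡ`, `e₂ˡ`, `e₃ˡ` are central. -/
theorem uqb2_central_powers (k : Type*) [Field k] (q : k)
    (l : ℕ) (hl : 5 ≤ l) (hq : IsPrimitiveRoot q l) :
    let e1 := RingQuot.mkAlgHom k (UqB2Rel k q) (ι k (0 : Fin 4))
    let e2 := RingQuot.mkAlgHom k (UqB2Rel k q) (ι k (1 : Fin 4))
    let e3 := RingQuot.mkAlgHom k (UqB2Rel k q) (ι k (2 : Fin 4))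
    let z := RingQuot.mkAlgHom k (UqB2Rel k q) (ι k (3 : Fin 4))
    z ∈ Subalgebra.center k (RingQuot (UqB2Rel k q)) ∧
    e1 ^ l ∈ Subalgebra.center k (RingQuot (UqB2Rel k q)) ∧
    e2 ^ l ∈ Subalgebra.center k (RingQuot (UqB2Rel k q)) ∧
    e3 ^ l ∈ Subalgebra.center k (RingQuot (UqB2Rel k q)) := by
  intro e1 e2 e3 z
  -- scalar setup
  have hq0 : q ≠ 0 := hq.ne_zero (by omega)
  set u : k := q ^ 2 with hu
  have hu0 : u ≠ 0 := pow_ne_zero 2 hq0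
  have hul : u ^ l = 1 := by
    rw [hu, ← pow_mul, mul_comm, pow_mul, hq.pow_eq_one, one_pow]
  have hu1 : u ≠ 1 := by
    intro h
    rw [hu] at h
    have := Nat.le_of_dvd (by norm_num) (hq.dvd_of_pow_eq_one 2 h)
    omega
  have hu2 : u ^ 2 ≠ 1 := by
    intro h
    rw [hu, ← pow_mul] at h
    have := Nat.le_of_dvd (by norm_num) (hq.dvd_of_pow_eq_one 4 h)
    omega
  have hv1 : u⁻¹ ≠ 1 := by intro h; exact hu1 (by rw [← inv_inv u, h, inv_one])
  have hvl : (u⁻¹) ^ l = 1 := by rw [inv_pow, hul, inv_one]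
  have hv2l : ((u ^ 2)⁻¹) ^ l = 1 := by
    rw [inv_pow, ← pow_mul, mul_comm, pow_mul, hul, one_pow, inv_one]
  have hv2 : (u ^ 2)⁻¹ ≠ 1 := by intro h; exact hu2 (by rw [← inv_inv (u ^ 2), h, inv_one])
  have hu2l : (u ^ 2) ^ l = 1 := by rw [← pow_mul, mul_comm, pow_mul, hul, one_pow]
  have hgeom : ∀ x : k, x ≠ 1 → x ^ l = 1 → ∑ j ∈ Finset.range l, x ^ j = 0 := by
    intro x h1 h2
    rw [geom_sum_eq h1, h2, sub_self, zero_div]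
  -- relations in the quotient
  have h1z : e1 * z = z * e1 := by
    have := RingQuot.mkAlgHom_rel k (UqB2Rel.e1z (k := k) (q := q))
    simpa only [map_mul] using this
  have h2z : e2 * z = z * e2 := by
    have := RingQuot.mkAlgHom_rel k (UqB2Rel.e2z (k := k) (q := q))
    simpa only [map_mul] using this
  have h3z : e3 * z = z * e3 := by
    have := RingQuot.mkAlgHom_rel k (UqB2Rel.e3z (k := k) (q := q))
    simpa only [map_mul] using this
  have h13 : e1 * e3 = u⁻¹ • (e3 * e1) := by
    have := RingQuot.mkAlgHom_rel k (UqB2Rel.e1e3 (k := k) (q := q))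
    simpa only [map_mul, map_smul] using this
  have h21 : e2 * e1 = u⁻¹ • (e1 * e2) - u⁻¹ • e3 := by
    have := RingQuot.mkAlgHom_rel k (UqB2Rel.e2e1 (k := k) (q := q))
    simpa only [map_mul, map_smul, map_sub] using this
  have h23 : e2 * e3 = u • (e3 * e2) + z := by
    have := RingQuot.mkAlgHom_rel k (UqB2Rel.e2e3 (k := k) (q := q))
    simpa only [map_mul, map_smul, map_add] using this
  have h31 : e3 * e1 = u • (e1 * e3) := by
    rw [h13, smul_smul, mul_inv_cancel₀ hu0, one_smul]
  have h12 : e1 * e2 = u • (e2 * e1) + e3 := by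
    rw [h21, smul_sub, smul_smul, smul_smul, mul_inv_cancel₀ hu0, one_smul, one_smul,
      sub_add_cancel]
  have h32 : e3 * e2 = u⁻¹ • (e2 * e3) + (-u⁻¹) • z := by
    rw [h23, smul_add, smul_smul, inv_mul_cancel₀ hu0, one_smul]
    module
  -- centrality criterion
  have hcentral : ∀ x : RingQuot (UqB2Rel k q),
      (∀ i : Fin 4, RingQuot.mkAlgHom k (UqB2Rel k q) (ι k i) * x
        = x * RingQuot.mkAlgHom k (UqB2Rel k q) (ι k i)) →
      x ∈ Subalgebra.center k (RingQuot (UqB2Rel k q)) := by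
    intro x hx
    rw [Subalgebra.mem_center_iff]
    intro b
    obtain ⟨f, rfl⟩ := RingQuot.mkAlgHom_surjective k (UqB2Rel k q) b
    induction f using FreeAlgebra.induction with
    | grade0 r => simp [AlgHom.commutes, Algebra.commutes]
    | grade1 i => exact hx i
    | mul a b ha hb => rw [map_mul, mul_assoc, hb, ← mul_assoc, ha, mul_assoc]
    | add a b ha hb => rw [map_add, add_mul, mul_add, ha, hb]
  -- the instantiated power-commutation formulas
  have hfr : ∀ n, uqb2SeqF u (n + 2) = u⁻¹ * uqb2SeqF u (n + 1) + -u⁻¹ := by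
    intro n; rw [uqb2SeqF_rec n, sub_eq_add_neg]
  have h3pow := uqb2_aux_powZ u⁻¹ (-u⁻¹) e2 e3 z h2z.symm h32 (uqb2SeqF u)
    uqb2SeqF_one hfr
  have hzc : z ∈ Subalgebra.center k (RingQuot (UqB2Rel k q)) := by
    apply hcentral
    intro i
    fin_cases i
    · exact h1z
    · exact h2z
    · exact h3z
    · rfl
  refine ⟨hzc, ?_, ?_, ?_⟩
  · -- e1 ^ l central
    apply hcentral
    intro i
    fin_cases i
    · exact ((Commute.refl e1).pow_right l).eq
    · show e2 * e1 ^ l = e1 ^ l * e2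
      obtain ⟨m, rfl⟩ : ∃ m, l = m + 1 := ⟨l - 1, by omega⟩
      rw [uqb2_aux_21 u u⁻¹ e1 e2 e3 h31 h21 (uqb2SeqA u) uqb2SeqA_one
        (uqb2SeqA_rec hu0) m, hvl, one_smul,
        uqb2SeqA_top (hgeom _ hu2 hu2l), zero_smul, sub_zero]
    · show e3 * e1 ^ l = e1 ^ l * e3
      rw [uqb2_aux_pow u e1 e3 h31 l, hul, one_smul]
    · have hc : Commute e1 z := h1z
      exact (hc.symm.pow_right l).eq
  · -- e2 ^ l central
    apply hcentral
    intro i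
    fin_cases i
    · show e1 * e2 ^ l = e2 ^ l * e1
      obtain ⟨m, rfl⟩ : ∃ m, l = m + 2 := ⟨l - 2, by omega⟩
      rw [uqb2_aux_12 u u⁻¹ e1 e2 e3 z h12 (uqb2SeqF u) h3pow
        (uqb2SeqC u) (uqb2SeqD u) uqb2SeqC_one uqb2SeqD_one
        (uqb2SeqC_rec hu0) (uqb2SeqD_rec hu0 hu1) m, hul, one_smul,
        uqb2SeqC_top (hgeom _ hv2 hv2l), zero_smul,
        uqb2SeqD_top (hgeom _ hv2 hv2l) (hgeom _ hv1 hvl), zero_smul,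
        add_zero, add_zero]
    · exact ((Commute.refl e2).pow_right l).eq
    · show e3 * e2 ^ l = e2 ^ l * e3
      obtain ⟨m, rfl⟩ : ∃ m, l = m + 1 := ⟨l - 1, by omega⟩
      rw [h3pow m, hvl, one_smul, uqb2SeqF_top (hgeom _ hv1 hvl), zero_smul, add_zero]
    · have hc : Commute e2 z := h2z
      exact (hc.symm.pow_right l).eq
  · -- e3 ^ l central
    apply hcentral
    intro i
    fin_cases i
    · show e1 * e3 ^ l = e3 ^ l * e1
      rw [uqb2_aux_pow u⁻¹ e3 e1 h13 l, hvl, one_smul]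
    · show e2 * e3 ^ l = e3 ^ l * e2
      obtain ⟨m, rfl⟩ : ∃ m, l = m + 1 := ⟨l - 1, by omega⟩
      have h23' : e2 * e3 = u • (e3 * e2) + (1 : k) • z := by rw [h23, one_smul]
      rw [uqb2_aux_powZ u 1 e3 e2 z h3z.symm h23' (uqb2SeqB u) uqb2SeqB_one
        (fun n => uqb2SeqB_rec n) m, hul, one_smul,
        uqb2SeqB_top (hgeom _ hu1 hul), zero_smul, add_zero]
    · exact ((Commute.refl e3).pow_right l).eq
    · have hc : Commute e3 z := h3z
      exact (hc.symm.pow_right l).eq
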